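/- Let U be uniform on the unit sphere of ℝ^q with q ≥ m, and let 0 < C₂ ≤ H_kk ≤ C₁ for r < k ≤ m. Then for r < j ≤ m, E[H_jj U_j² / (Σ_{k=1}^q H_kk U_k²)] ≤ C₁ / ((m − r) C₂). -/

import Mathlib

open MeasureTheory Finset Matrix

lemma permMatrix_orth {q : ℕ} (σ : Equiv.Perm (Fin q)) :
    σ.permMatrix ℝ ∈ Matrix.orthogonalGroup (Fin q) ℝ := by
  rw [Matrix.mem_orthogonalGroup_iff]
  have h1 : star (σ.permMatrix ℝ) = (σ.permMatrix ℝ)ᵀ := by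
    rw [Matrix.star_eq_conjTranspose]
    ext i k
    simp [Matrix.conjTranspose_apply]
  rw [← PEquiv.toMatrix_symm, ← Equiv.toPEquiv_symm,
    PEquiv.toMatrix_toPEquiv_mul]
  ext i k
  simp [PEquiv.toMatrix_apply, Equiv.toPEquiv_apply, Matrix.one_apply, Equiv.symm_apply_eq]

lemma permMatrix_mulVec {q : ℕ} (σ : Equiv.Perm (Fin q)) (v : Fin q → ℝ) (i : Fin q) :
    (σ.permMatrix ℝ).mulVec v i = v (σ i) := by
  simp [Matrix.mulVec, dotProduct, PEquiv.toMatrix_apply, Equiv.toPEquiv_apply]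

theorem kendall_nonspiked_eig_upper_bound
    {Ω : Type*} [MeasurableSpace Ω] (μ : Measure Ω) [IsProbabilityMeasure μ]
    {q : ℕ} (U : Ω → Fin q → ℝ) (hUmeas : Measurable U)
    -- `U` is uniform on the unit sphere of ℝ^q :
    (hUsphere : ∀ᵐ ω ∂μ, ∑ k, U ω k ^ 2 = 1)
    (hUunif : ∀ O : Matrix.orthogonalGroup (Fin q) ℝ,
      ProbabilityTheory.IdentDistrib (fun ω => (O : Matrix (Fin q) (Fin q) ℝ).mulVec (U ω)) U μ μ)
    (H : Fin q → ℝ) (hHnonneg : ∀ k, 0 ≤ H k)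
    (r m : ℕ) (hrm : r < m) (hmq : m ≤ q)
    (C₁ C₂ : ℝ) (hC₂ : 0 < C₂)
    (hHband : ∀ k : Fin q, r ≤ (k : ℕ) → (k : ℕ) < m → C₂ ≤ H k ∧ H k ≤ C₁)
    (j : Fin q) (hjr : r ≤ (j : ℕ)) (hjm : (j : ℕ) < m) :
    ∫ ω, (H j * U ω j ^ 2) / (∑ k, H k * U ω k ^ 2) ∂μ ≤ C₁ / ((m - r : ℕ) * C₂) := by
  classical
  have hC₁ : C₂ ≤ C₁ := le_trans (hHband j hjr hjm).1 (hHband j hjr hjm).2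
  have hC₁pos : 0 < C₁ := lt_of_lt_of_le hC₂ hC₁
  set band : Finset (Fin q) := Finset.univ.filter (fun k => r ≤ (k : ℕ) ∧ (k : ℕ) < m)
    with hband
  have hmem : ∀ k : Fin q, k ∈ band ↔ (r ≤ (k : ℕ) ∧ (k : ℕ) < m) := by
    intro k; simp [hband]
  have hjband : j ∈ band := (hmem j).2 ⟨hjr, hjm⟩
  set S : Ω → ℝ := fun ω => ∑ k ∈ band, U ω k ^ 2 with hSdef
  set g : Fin q → Ω → ℝ := fun k ω => U ω k ^ 2 / S ω with hgdef
  have hSnonneg : ∀ ω, 0 ≤ S ω := fun ω => Finset.sum_nonneg fun k _ => sq_nonneg _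
  have hle : ∀ k ∈ band, ∀ ω, U ω k ^ 2 ≤ S ω := fun k hk ω =>
    Finset.single_le_sum (fun i _ => sq_nonneg (U ω i)) hk
  have hUk : ∀ k : Fin q, Measurable fun ω => U ω k :=
    fun k => (measurable_pi_apply k).comp hUmeas
  have hSmeas : Measurable S := by
    apply Finset.measurable_sum
    intro k _
    exact (hUk k).pow measurable_const
  have hgmeas : ∀ k, Measurable (g k) := by
    intro k
    exact ((hUk k).pow measurable_const).div hSmeas
  have hgnonneg : ∀ k ω, 0 ≤ g k ω := fun k ω => div_nonneg (sq_nonneg _) (hSnonneg ω)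
  have hgle1 : ∀ k ∈ band, ∀ ω, g k ω ≤ 1 := by
    intro k hk ω
    rcases eq_or_lt_of_le (hSnonneg ω) with h0 | hpos
    · have : U ω k ^ 2 = 0 := le_antisymm ((hle k hk ω).trans_eq h0.symm) (sq_nonneg _)
      simp [hgdef, this]
    · exact div_le_one_of_le₀ (hle k hk ω) (le_of_lt hpos)
  have hgint : ∀ k ∈ band, Integrable (g k) μ := by
    intro k hk
    refine Integrable.mono' (integrable_const 1) (hgmeas k).aestronglyMeasurable ?_
    filter_upwards with ω
    rw [Real.norm_eq_abs, abs_of_nonneg (hgnonneg k ω)]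
    exact hgle1 k hk ω
  -- all g k, k ∈ band, have the same integral as g j
  have hsame : ∀ k ∈ band, ∫ ω, g k ω ∂μ = ∫ ω, g j ω ∂μ := by
    intro k hk
    set σ : Equiv.Perm (Fin q) := Equiv.swap j k with hσ
    have hσband : ∀ i : Fin q, i ∈ band ↔ σ i ∈ band := by
      intro i
      rcases eq_or_ne i j with rfl | hij
      · simp [hσ, Equiv.swap_apply_left, hjband, hk]
      rcases eq_or_ne i k with rfl | hik
      · simp [hσ, Equiv.swap_apply_right, hjband, hk]
      · rw [hσ, Equiv.swap_apply_of_ne_of_ne hij hik]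
    set F : (Fin q → ℝ) → ℝ := fun v => v k ^ 2 / ∑ i ∈ band, v i ^ 2 with hF
    have hFmeas : Measurable F := by
      apply Measurable.div
      · exact (measurable_pi_apply k).pow measurable_const
      · exact Finset.measurable_sum _ fun i _ => (measurable_pi_apply i).pow measurable_const
    have hid := ((hUunif ⟨σ.permMatrix ℝ, permMatrix_orth σ⟩).comp hFmeas).integral_eq
    have hcomp : (F ∘ fun ω => (σ.permMatrix ℝ).mulVec (U ω)) = g j := by
      funext ω
      show F (fun i => (σ.permMatrix ℝ).mulVec (U ω) i) = g j ω
      have h1 : (fun i => (σ.permMatrix ℝ).mulVec (U ω) i) = fun i => U ω (σ i) := by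
        funext i; exact permMatrix_mulVec σ (U ω) i
      rw [h1]
      show U ω (σ k) ^ 2 / (∑ i ∈ band, U ω (σ i) ^ 2) = U ω j ^ 2 / S ω
      have h2 : σ k = j := Equiv.swap_apply_right j k
      have h3 : ∑ i ∈ band, U ω (σ i) ^ 2 = S ω := by
        rw [hSdef]
        exact Finset.sum_equiv σ (fun i => hσband i) (fun i _ => rfl)
      rw [h2, h3]
    have hcomp2 : (F ∘ U) = g k := by
      funext ω; rfl
    rw [hcomp, hcomp2] at hid
    exact hid.symm
  -- sum of integrals is at most 1
  have hsum : (band.card : ℝ) * ∫ ω, g j ω ∂μ ≤ 1 := by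
    have h1 : ∑ k ∈ band, ∫ ω, g k ω ∂μ = (band.card : ℝ) * ∫ ω, g j ω ∂μ := by
      rw [Finset.sum_congr rfl hsame, Finset.sum_const, nsmul_eq_mul]
    rw [← h1, ← integral_finset_sum band hgint]
    calc ∫ ω, ∑ k ∈ band, g k ω ∂μ ≤ ∫ _, (1 : ℝ) ∂μ := by
          apply integral_mono (integrable_finset_sum band hgint) (integrable_const 1)
          intro ω
          show ∑ k ∈ band, g k ω ≤ (1 : ℝ)
          have : ∑ k ∈ band, g k ω = S ω / S ω := by
            rw [hgdef, ← Finset.sum_div]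
          rw [this]
          rcases eq_or_lt_of_le (hSnonneg ω) with h0 | hpos
          · rw [← h0]; norm_num
          · rw [div_self (ne_of_gt hpos)]
      _ = 1 := by simp
  have hcard : band.card = m - r := by
    rw [hband]
    rw [← Nat.card_Ico r m]
    apply Finset.card_bij (fun (i : Fin q) _ => (i : ℕ))
    · intro a ha
      simp only [Finset.mem_filter, Finset.mem_univ, true_and] at ha
      simp [Finset.mem_Ico, ha.1, ha.2]
    · intro a ha b hb hab
      exact Fin.ext hab
    · intro b hb
      simp only [Finset.mem_Ico] at hb
      exact ⟨⟨b, lt_of_lt_of_le hb.2 hmq⟩, by simp [hb.1, hb.2], rfl⟩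
  -- the pointwise bound
  have hmr : 0 < m - r := Nat.sub_pos_of_lt hrm
  have hmrR : (0 : ℝ) < ((m - r : ℕ) : ℝ) := by exact_mod_cast hmr
  have hgjint : Integrable (g j) μ := hgint j hjband
  have hptwise : ∀ ω, (H j * U ω j ^ 2) / (∑ k, H k * U ω k ^ 2) ≤ (C₁ / C₂) * g j ω := by
    intro ω
    have hDS : C₂ * S ω ≤ ∑ k, H k * U ω k ^ 2 := by
      calc C₂ * S ω = ∑ k ∈ band, C₂ * U ω k ^ 2 := by rw [hSdef, Finset.mul_sum]
        _ ≤ ∑ k ∈ band, H k * U ω k ^ 2 := by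
            apply Finset.sum_le_sum
            intro k hk
            exact mul_le_mul_of_nonneg_right ((hHband k ((hmem k).1 hk).1 ((hmem k).1 hk).2).1)
              (sq_nonneg _)
        _ ≤ ∑ k, H k * U ω k ^ 2 := by
            apply Finset.sum_le_sum_of_subset_of_nonneg (Finset.subset_univ band)
            intro k _ _
            exact mul_nonneg (hHnonneg k) (sq_nonneg _)
    rcases eq_or_lt_of_le (hSnonneg ω) with h0 | hpos
    · have hU0 : U ω j ^ 2 = 0 :=
        le_antisymm (h0 ▸ hle j hjband ω) (sq_nonneg _)
      simp [hgdef, hU0]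
    · have hDpos : 0 < ∑ k, H k * U ω k ^ 2 :=
        lt_of_lt_of_le (mul_pos hC₂ hpos) hDS
      have key : (H j * U ω j ^ 2) / (∑ k, H k * U ω k ^ 2) ≤
          (C₁ * U ω j ^ 2) / (C₂ * S ω) := by
        apply div_le_div₀ (mul_nonneg (le_of_lt hC₁pos) (sq_nonneg _))
          (mul_le_mul_of_nonneg_right (hHband j hjr hjm).2 (sq_nonneg _))
          (mul_pos hC₂ hpos) hDS
      calc (H j * U ω j ^ 2) / (∑ k, H k * U ω k ^ 2) ≤ (C₁ * U ω j ^ 2) / (C₂ * S ω) := key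
        _ = (C₁ / C₂) * g j ω := by rw [hgdef]; rw [div_mul_div_comm]
  -- conclude
  have hlhsint : Integrable (fun ω => (H j * U ω j ^ 2) / (∑ k, H k * U ω k ^ 2)) μ := by
    refine Integrable.mono' (hgjint.const_mul (C₁ / C₂)) ?_ ?_
    · apply Measurable.aestronglyMeasurable
      apply Measurable.div
      · exact ((hUk j).pow measurable_const).const_mul _
      · exact Finset.measurable_sum _ fun i _ => ((hUk i).pow measurable_const).const_mul _
    · filter_upwards with ω
      rw [Real.norm_eq_abs, abs_of_nonneg]
      · exact hptwise ω
      · apply div_nonneg (mul_nonneg (hHnonneg j) (sq_nonneg _))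
        exact Finset.sum_nonneg fun k _ => mul_nonneg (hHnonneg k) (sq_nonneg _)
  have hgj_le : ∫ ω, g j ω ∂μ ≤ 1 / ((m - r : ℕ) : ℝ) := by
    rw [le_div_iff₀ hmrR]
    calc (∫ ω, g j ω ∂μ) * ((m - r : ℕ) : ℝ)
        = (band.card : ℝ) * ∫ ω, g j ω ∂μ := by rw [hcard]; ring
      _ ≤ 1 := hsum
  calc ∫ ω, (H j * U ω j ^ 2) / (∑ k, H k * U ω k ^ 2) ∂μ
      ≤ ∫ ω, (C₁ / C₂) * g j ω ∂μ := by
        apply integral_mono hlhsint (hgjint.const_mul _) hptwise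
    _ = (C₁ / C₂) * ∫ ω, g j ω ∂μ := integral_const_mul _ _
    _ ≤ (C₁ / C₂) * (1 / ((m - r : ℕ) : ℝ)) := by
        apply mul_le_mul_of_nonneg_left hgj_le (div_nonneg (le_of_lt hC₁pos) (le_of_lt hC₂))
    _ = C₁ / ((m - r : ℕ) * C₂) := by
        rw [div_mul_div_comm, mul_one, mul_comm]
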